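/- For every k ≥ 0, the language L(A_k) is not k-piecewise testable, where A_k is the NFA with states {0, 1, …, k}, alphabet {a_0, a_1, …, a_k}, all states initial, accepting state 0, and transitions: i·a_j = {i} whenever k ≥ i > j ≥ 0, and i·a_i = {0, 1, …, i−1} whenever k ≥ i ≥ 1 (no other transitions). -/

import Mathlib

/-- `subk k w` is the set of scattered subwords of `w` of length at most `k`. -/
def subk {α : Type*} (k : ℕ) (w : List α) : Set (List α) :=
  {u | u.length ≤ k ∧ u.Sublist w}

/-- Two words are `k`-equivalent if they have the same subwords of length at most `k`. -/
def kEquiv {α : Type*} (k : ℕ) (u v : List α) : Prop :=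
  subk k u = subk k v

/-- A language is `k`-piecewise testable (Simon's characterization):
`k`-equivalent words are equi-members. -/
def IsPT {α : Type*} (k : ℕ) (L : Language α) : Prop :=
  ∀ u v : List α, kEquiv k u v → (u ∈ L ↔ v ∈ L)

/-- A DFA is minimal if all states are reachable and pairwise distinguishable. -/
def IsMinimalDFA {α σ : Type*} (A : DFA α σ) : Prop :=
  (∀ q : σ, ∃ w : List α, A.eval w = q) ∧
  ∀ p q : σ,
    (∀ w : List α, (A.evalFrom p w ∈ A.accept ↔ A.evalFrom q w ∈ A.accept)) → p = q

/-- There is a simple path (pairwise distinct states) with `m` transitions in the DFA `A`. -/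
def DFAHasSimplePath {α σ : Type*} (A : DFA α σ) (m : ℕ) : Prop :=
  ∃ (qs : Fin (m + 1) → σ) (as : Fin m → α),
    Function.Injective qs ∧ ∀ i : Fin m, A.step (qs i.castSucc) (as i) = qs i.succ

/-- The depth of a DFA: the number of transitions on a longest simple path. -/
noncomputable def dfaDepth {α σ : Type*} (A : DFA α σ) : ℕ :=
  sSup {m | DFAHasSimplePath A m}

/-- There is a simple path (pairwise distinct states) with `m` transitions in the NFA `A`. -/
def NFAHasSimplePath {α σ : Type*} (A : NFA α σ) (m : ℕ) : Prop :=
  ∃ (qs : Fin (m + 1) → σ) (as : Fin m → α),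
    Function.Injective qs ∧ ∀ i : Fin m, qs i.succ ∈ A.step (qs i.castSucc) (as i)

/-- The depth of an NFA: the number of transitions on a longest simple path. -/
noncomputable def nfaDepth {α σ : Type*} (A : NFA α σ) : ℕ :=
  sSup {m | NFAHasSimplePath A m}

/-- The NFA `A_k`: states `{0,…,k}`, alphabet `{a_0,…,a_k}` (both modeled by
`Fin (k+1)`), all states initial, accepting state `0`, with `i·a_j = {i}` for
`i > j` and `i·a_i = {0,…,i-1}` for `i ≥ 1` (no other transitions). -/
def Ak (k : ℕ) : NFA (Fin (k + 1)) (Fin (k + 1)) where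
  step := fun q a =>
    if a < q then {q} else if q = a ∧ 0 < q then {p | p < q} else ∅
  start := Set.univ
  accept := {0}

open Fin.NatCast

/- ------------------ auxiliary definitions and lemmas ------------------ -/

/-- The block `C_j = a_0 a_1 ⋯ a_j`. -/
def blk (k j : ℕ) : List (Fin (k + 1)) :=
  (List.range (j + 1)).map (fun i : ℕ => (i : Fin (k + 1)))

/-- `UU k j = C_j C_{j-1} ⋯ C_1`. -/
def UU (k : ℕ) : ℕ → List (Fin (k + 1))
  | 0 => []
  | j + 1 => blk k (j + 1) ++ UU k j

/-- `TT k j = C_{j+1} C_j ⋯ C_2`. -/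
def TT (k : ℕ) : ℕ → List (Fin (k + 1))
  | 0 => []
  | j + 1 => blk k (j + 2) ++ TT k j

lemma val_cast_of_le {k i : ℕ} (h : i ≤ k) : ((i : Fin (k + 1)) : ℕ) = i := by
  rw [Fin.val_natCast, Nat.mod_eq_of_lt (by omega)]

lemma cast_lt_cast {k i j : ℕ} (hij : i < j) (hj : j ≤ k) :
    (i : Fin (k + 1)) < (j : Fin (k + 1)) := by
  rw [Fin.lt_def, val_cast_of_le (by omega), val_cast_of_le hj]; exact hij

lemma blk_succ (k j : ℕ) :
    blk k (j + 1) = blk k j ++ [((j + 1 : ℕ) : Fin (k + 1))] := by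
  simp [blk, List.range_succ]

lemma blk_sublist (k j : ℕ) : (blk k j).Sublist (blk k (j + 1)) := by
  rw [blk_succ]; exact List.sublist_append_left _ _

lemma zero_mem_blk (k j : ℕ) : (0 : Fin (k + 1)) ∈ blk k j := by
  rw [blk]
  refine List.mem_map.mpr ⟨0, List.mem_range.mpr (Nat.succ_pos j), by simp⟩

lemma UU_sublist_TT (k : ℕ) : ∀ j, (UU k j).Sublist (TT k j) := by
  intro j
  induction j with
  | zero => exact List.Sublist.refl _
  | succ j ih => exact List.Sublist.append (blk_sublist k (j + 1)) ih

lemma TT_append_blk (k : ℕ) : ∀ j, TT k j ++ blk k 1 = UU k (j + 1) := by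
  intro j
  induction j with
  | zero => show [] ++ blk k 1 = blk k 1 ++ UU k 0; simp [UU]
  | succ j ih =>
    show (blk k (j + 2) ++ TT k j) ++ blk k 1 = blk k (j + 2) ++ UU k (j + 1)
    rw [List.append_assoc, ih]

/-- Key combinatorial lemma: a short enough scattered subword of `UU k j`
stays one after appending a letter `a_0`. -/
lemma key (k : ℕ) : ∀ j, ∀ z : List (Fin (k + 1)),
    z.Sublist (UU k j) → z.length < j → (z ++ [0]).Sublist (UU k j) := by
  intro j
  induction j with
  | zero => intro z _ h; omega
  | succ j ih =>
    intro z hz hlen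
    have hz' : z.Sublist (blk k (j + 1) ++ UU k j) := hz
    obtain ⟨z1, z2, rfl, h1, h2⟩ := List.sublist_append_iff.mp hz'
    cases z1 with
    | nil =>
      have h3 : z2.Sublist (TT k j) := h2.trans (UU_sublist_TT k j)
      have h4 : [(0 : Fin (k + 1))].Sublist (blk k 1) := by
        rw [List.singleton_sublist]; exact zero_mem_blk k 1
      have h5 : (z2 ++ [0]).Sublist (TT k j ++ blk k 1) := List.Sublist.append h3 h4
      rw [TT_append_blk] at h5
      simpa using h5
    | cons a l =>
      have hlen2 : z2.length < j := by
        have := hlen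
        simp [List.length_append] at this
        omega
      have h6 := ih z2 h2 hlen2
      have : ((a :: l) ++ (z2 ++ [0])).Sublist (blk k (j + 1) ++ UU k j) :=
        List.Sublist.append h1 h6
      simpa [List.append_assoc, UU] using this

lemma stay (k : ℕ) (q : Fin (k + 1)) :
    ∀ l : List (Fin (k + 1)), (∀ a ∈ l, a < q) →
      ∀ S : Set (Fin (k + 1)), q ∈ S → q ∈ (Ak k).evalFrom S l := by
  intro l
  induction l with
  | nil => intro _ S hS; exact hS
  | cons a l ih =>
    intro hlt S hS
    have ha : a < q := hlt a List.mem_cons_self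
    have hstep : q ∈ (Ak k).stepSet S a := by
      rw [NFA.mem_stepSet]
      refine ⟨q, hS, ?_⟩
      show q ∈ if a < q then {q} else if q = a ∧ 0 < q then {p | p < q} else ∅
      rw [if_pos ha]; rfl
    exact ih (fun b hb => hlt b (List.mem_cons_of_mem a hb)) _ hstep

lemma evalFrom_append (k : ℕ) (S : Set (Fin (k + 1))) (l1 l2 : List (Fin (k + 1))) :
    (Ak k).evalFrom S (l1 ++ l2) = (Ak k).evalFrom ((Ak k).evalFrom S l1) l2 := by
  simp [NFA.evalFrom, List.foldl_append]

lemma acc (k : ℕ) : ∀ j, j ≤ k → ∀ S : Set (Fin (k + 1)),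
    ((j : Fin (k + 1)) ∈ S) → (0 : Fin (k + 1)) ∈ (Ak k).evalFrom S (UU k j) := by
  intro j
  induction j with
  | zero => intro _ S hS; simpa [UU] using hS
  | succ j ih =>
    intro hjk S hS
    show (0 : Fin (k + 1)) ∈ (Ak k).evalFrom S (blk k (j + 1) ++ UU k j)
    rw [evalFrom_append]
    refine ih (by omega) _ ?_
    rw [blk_succ, evalFrom_append, NFA.evalFrom_singleton, NFA.mem_stepSet]
    have hq : ((j + 1 : ℕ) : Fin (k + 1)) ∈ (Ak k).evalFrom S (blk k j) := by
      refine stay k _ _ ?_ S hS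
      intro a ha
      rw [blk] at ha
      obtain ⟨i, hi, rfl⟩ := List.mem_map.mp ha
      rw [List.mem_range] at hi
      exact cast_lt_cast (show i < j + 1 by omega) hjk
    refine ⟨_, hq, ?_⟩
    set q : Fin (k + 1) := ((j + 1 : ℕ) : Fin (k + 1)) with hqdef
    show ((j : ℕ) : Fin (k + 1)) ∈
      if q < q then {q} else if q = q ∧ 0 < q then {p | p < q} else ∅
    have h0q : (0 : Fin (k + 1)) < q := by
      rw [Fin.lt_def, val_cast_of_le hjk]; simp
    rw [if_neg (lt_irrefl q), if_pos ⟨rfl, h0q⟩]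
    exact cast_lt_cast (Nat.lt_succ_self j) hjk

lemma u_mem (k : ℕ) : UU k k ∈ (Ak k).accepts := by
  rw [NFA.mem_accepts]
  refine ⟨0, rfl, ?_⟩
  exact acc k k le_rfl Set.univ (Set.mem_univ _)

lemma v_not_mem (k : ℕ) : UU k k ++ [0] ∉ (Ak k).accepts := by
  rw [NFA.mem_accepts]
  rintro ⟨q, hq, hv⟩
  have hq0 : q = 0 := hq
  subst hq0
  rw [show (Ak k).evalFrom (Ak k).start (UU k k ++ [0])
      = (Ak k).stepSet ((Ak k).evalFrom (Ak k).start (UU k k)) 0 from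
      by rw [NFA.evalFrom_append, NFA.evalFrom_singleton]] at hv
  rw [NFA.mem_stepSet] at hv
  obtain ⟨t, _, hstep⟩ := hv
  by_cases ht : (0 : Fin (k + 1)) < t
  · have : (0 : Fin (k + 1)) ∈ ({t} : Set (Fin (k + 1))) := by
      have h := hstep
      show (0 : Fin (k+1)) ∈ ({t} : Set (Fin (k+1)))
      have : (if (0 : Fin (k+1)) < t then ({t} : Set (Fin (k+1)))
          else if t = 0 ∧ 0 < t then {p | p < t} else ∅) = {t} := if_pos ht
      rw [show ((Ak k).step t 0 : Set (Fin (k+1))) =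
          (if (0 : Fin (k+1)) < t then ({t} : Set (Fin (k+1)))
          else if t = 0 ∧ 0 < t then {p | p < t} else ∅) from rfl, this] at h
      exact h
    rw [Set.mem_singleton_iff] at this
    exact absurd this (ne_of_lt ht)
  · have ht0 : ¬ (t = 0 ∧ 0 < t) := by rintro ⟨rfl, h⟩; exact ht h
    have : ((Ak k).step t 0 : Set (Fin (k+1))) = ∅ := by
      show (if (0 : Fin (k+1)) < t then ({t} : Set (Fin (k+1)))
          else if t = 0 ∧ 0 < t then {p | p < t} else ∅) = ∅
      rw [if_neg ht, if_neg ht0]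
    rw [this] at hstep
    exact hstep

lemma equiv_uv (k : ℕ) : kEquiv k (UU k k) (UU k k ++ [0]) := by
  unfold kEquiv subk
  ext z
  simp only [Set.mem_setOf_eq]
  constructor
  · rintro ⟨hlen, hsub⟩
    exact ⟨hlen, hsub.trans (List.sublist_append_left _ _)⟩
  · rintro ⟨hlen, hsub⟩
    refine ⟨hlen, ?_⟩
    obtain ⟨z1, z2, rfl, h1, h2⟩ := List.sublist_append_iff.mp hsub
    rcases List.sublist_singleton.mp h2 with rfl | rfl
    · simpa using h1
    · refine key k k z1 h1 ?_
      have := hlen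
      simp [List.length_append] at this ⊢
      omega

/-- The language `L(A_k)` is not `k`-piecewise testable. -/
theorem stmt12 (k : ℕ) : ¬ IsPT k (Ak k).accepts := by
  intro h
  have := h (UU k k) (UU k k ++ [0]) (equiv_uv k)
  exact v_not_mem k (this.mp (u_mem k))
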